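/- Let K be a complete nonarchimedean field, f ∈ K⟨t₁,…,t_m⟩ an overconvergent power series with Gauss norm ‖f‖₁ ≤ 1, and ρ > 1. Then there exists λ > 1 such that for every g ∈ 𝔗₁(ρ), the composite g∘f = ∑ⱼ bⱼ f^j converges in 𝔗_m(λ). Consequently substitution t ↦ f defines a ring homomorphism 𝔗₁(ρ) → 𝔗_m(λ). -/

import Mathlib

/-!
STATEMENT 10: Let `f ∈ K⟨t₁,…,t_m⟩` be an overconvergent power series with Gauss norm
`‖f‖₁ ≤ 1` and `ρ > 1`.  Then there exists `λ > 1` such that for every `g ∈ 𝔗₁(ρ)` the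
composite `g∘f = ∑ⱼ bⱼ fʲ` converges (coefficientwise) in `𝔗_m(λ)`, and substitution
`t ↦ f` defines a ring homomorphism `𝔗₁(ρ) → 𝔗_m(λ)`.
-/

open MvPowerSeries Filter

/-- Membership in `𝔗ₙ(ρ)`. -/
def MemT {K : Type*} [NontriviallyNormedField K] (n : ℕ) (ρ : ℝ)
    (f : MvPowerSeries (Fin n) K) : Prop :=
  Tendsto (fun I : Fin n →₀ ℕ => ‖coeff I f‖ * ρ ^ (I.sum fun _ k => k))
    cofinite (nhds 0)

/-- The ρ-Gauss norm. -/
noncomputable def gaussNormAt {K : Type*} [NontriviallyNormedField K] {n : ℕ} (ρ : ℝ)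
    (f : MvPowerSeries (Fin n) K) : ℝ :=
  ⨆ I : Fin n →₀ ℕ, ‖coeff I f‖ * ρ ^ (I.sum fun _ k => k)

/-- The composite `g ∘ f = ∑ⱼ bⱼ fʲ`, defined coefficientwise by convergent series. -/
noncomputable def subst {K : Type*} [NontriviallyNormedField K] {m : ℕ}
    (g : PowerSeries K) (f : MvPowerSeries (Fin m) K) : MvPowerSeries (Fin m) K :=
  fun I => ∑' j : ℕ, PowerSeries.coeff j g * coeff I (f ^ j)

/-- The total degree tends to infinity on the cofinite filter. -/
lemma aux_deg_tendsto (m : ℕ) :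
    Tendsto (fun I : Fin m →₀ ℕ => (I.sum fun _ k => k)) cofinite atTop := by
  rw [tendsto_atTop]
  intro b
  rw [eventually_cofinite]
  refine (Set.finite_Iic (Finsupp.equivFunOnFinite.symm fun _ => b)).subset ?_
  intro I hI
  simp only [Set.mem_setOf_eq, not_le] at hI
  rw [Set.mem_Iic, Finsupp.le_def]
  intro i
  have hIi : I i ≤ I.sum fun _ k => k := by
    by_cases h : i ∈ I.support
    · exact Finset.single_le_sum (f := fun a => I a) (fun _ _ => Nat.zero_le _) h
    · simp [Finsupp.notMem_support_iff.mp h]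
  have hb : (Finsupp.equivFunOnFinite.symm fun _ => b) i = b := rfl
  rw [hb]
  omega

lemma aux_prod_tendsto {u v : ℕ → ℝ} (hu0 : ∀ n, 0 ≤ u n) (hv0 : ∀ n, 0 ≤ v n)
    (hu : Tendsto u atTop (nhds 0)) (hv : Tendsto v atTop (nhds 0)) :
    Tendsto (fun p : ℕ × ℕ => u p.1 * v p.2) cofinite (nhds 0) := by
  rw [← Nat.cofinite_eq_atTop] at hu hv
  obtain ⟨Cu, hCu⟩ := hu.bddAbove_range_of_cofinite
  obtain ⟨Cv, hCv⟩ := hv.bddAbove_range_of_cofinite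
  set C : ℝ := max (max Cu Cv) 1 with hCdef
  have hC : (0:ℝ) < C := lt_of_lt_of_le one_pos (le_max_right _ _)
  have hCu' : ∀ n, u n ≤ C := fun n =>
    le_trans (hCu (Set.mem_range_self n)) (le_trans (le_max_left _ _) (le_max_left _ _))
  have hCv' : ∀ n, v n ≤ C := fun n =>
    le_trans (hCv (Set.mem_range_self n)) (le_trans (le_max_right _ _) (le_max_left _ _))
  rw [NormedAddCommGroup.tendsto_nhds_zero]
  intro ε hε
  rw [eventually_cofinite]
  have hεC : (0:ℝ) < ε / C := by positivity
  have h1 : {n : ℕ | ¬ u n < ε / C}.Finite := by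
    have := eventually_cofinite.mp (hu (Iio_mem_nhds hεC))
    exact this.subset fun n hn => by simpa using hn
  have h2 : {n : ℕ | ¬ v n < ε / C}.Finite := by
    have := eventually_cofinite.mp (hv (Iio_mem_nhds hεC))
    exact this.subset fun n hn => by simpa using hn
  refine (h1.prod h2).subset ?_
  rintro ⟨j, k⟩ hp
  simp only [Set.mem_setOf_eq, not_lt] at hp
  have habs : ‖u j * v k‖ = u j * v k := by
    rw [Real.norm_eq_abs, abs_of_nonneg (mul_nonneg (hu0 j) (hv0 k))]
  rw [habs] at hp
  constructor
  · simp only [Set.mem_setOf_eq, not_lt]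
    by_contra h
    push_neg at h
    have : u j * v k < ε := by
      calc u j * v k ≤ u j * C := mul_le_mul_of_nonneg_left (hCv' k) (hu0 j)
        _ < (ε / C) * C := mul_lt_mul_of_pos_right h hC
        _ = ε := div_mul_cancel₀ ε hC.ne'
    linarith
  · simp only [Set.mem_setOf_eq, not_lt]
    by_contra h
    push_neg at h
    have : u j * v k < ε := by
      calc u j * v k ≤ C * v k := mul_le_mul_of_nonneg_right (hCu' j) (hv0 k)
        _ < C * (ε / C) := mul_lt_mul_of_pos_left h hC
        _ = ε := mul_div_cancel₀ ε hC.ne'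
    linarith


theorem substitution_into_overconvergent_series
    {K : Type*} [NontriviallyNormedField K] [CompleteSpace K]
    (hna : ∀ x y : K, ‖x + y‖ ≤ max ‖x‖ ‖y‖) (m : ℕ)
    (f : MvPowerSeries (Fin m) K)
    (hover : ∃ ρ₀ : ℝ, 1 < ρ₀ ∧ MemT m ρ₀ f)
    (hnorm : gaussNormAt 1 f ≤ 1) (ρ : ℝ) (hρ : 1 < ρ) :
    ∃ lam : ℝ, 1 < lam ∧
      ∀ g : PowerSeries K,
        Tendsto (fun j : ℕ => ‖PowerSeries.coeff j g‖ * ρ ^ j) atTop (nhds 0) →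
        -- the series ∑ⱼ bⱼ fʲ converges coefficientwise
        (∀ I : Fin m →₀ ℕ, Summable fun j : ℕ =>
          PowerSeries.coeff j g * coeff I (f ^ j)) ∧
        -- the composite lies in 𝔗_m(λ)
        MemT m lam (_root_.subst g f) ∧
        -- substitution is a ring homomorphism 𝔗₁(ρ) → 𝔗_m(λ)
        _root_.subst (1 : PowerSeries K) f = 1 ∧
        (∀ g' : PowerSeries K,
          Tendsto (fun j : ℕ => ‖PowerSeries.coeff j g'‖ * ρ ^ j) atTop (nhds 0) →
          _root_.subst (g + g') f = _root_.subst g f + _root_.subst g' f ∧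
          _root_.subst (g * g') f = _root_.subst g f * _root_.subst g' f) := by
  classical
  haveI hUD : IsUltrametricDist K :=
    IsUltrametricDist.isUltrametricDist_of_isNonarchimedean_norm hna
  obtain ⟨ρ₀, hρ₀, hT⟩ := hover
  have hρ₀0 : (0:ℝ) < ρ₀ := lt_trans one_pos hρ₀
  have hρ0 : (0:ℝ) < ρ := lt_trans one_pos hρ
  set deg : (Fin m →₀ ℕ) → ℕ := fun I => I.sum fun _ k => k with hdegdef
  -- `coeff (_root_.subst h f)` is the defining tsum
  have hC : ∀ (h : PowerSeries K) (J : Fin m →₀ ℕ),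
      coeff J (_root_.subst h f) = ∑' j : ℕ, PowerSeries.coeff j h * coeff J (f ^ j) :=
    fun h J => rfl
  -- bound M for the ρ₀-weighted coefficients
  obtain ⟨M₀, hM₀⟩ := hT.bddAbove_range_of_cofinite
  set M : ℝ := max M₀ 1 with hMdef
  have hM1 : (1:ℝ) ≤ M := le_max_right _ _
  have hM0 : (0:ℝ) < M := lt_of_lt_of_le one_pos hM1
  have hM : ∀ I, ‖coeff I f‖ * ρ₀ ^ deg I ≤ M := fun I =>
    le_trans (hM₀ (Set.mem_range_self I)) (le_max_left _ _)
  -- coefficients of f are ≤ 1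
  have hb1 : ∀ I : Fin m →₀ ℕ, ‖coeff I f‖ ≤ 1 := by
    intro I
    have hba : BddAbove (Set.range fun I : Fin m →₀ ℕ =>
        ‖coeff I f‖ * (1:ℝ) ^ (I.sum fun _ k => k)) := by
      refine ⟨M, ?_⟩
      rintro _ ⟨J, rfl⟩
      simp only [one_pow, mul_one]
      calc ‖coeff J f‖ = ‖coeff J f‖ * 1 := (mul_one _).symm
        _ ≤ ‖coeff J f‖ * ρ₀ ^ deg J :=
            mul_le_mul_of_nonneg_left (one_le_pow₀ hρ₀.le) (norm_nonneg _)
        _ ≤ M := hM J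
    have h1 := le_ciSup hba I
    have h2 : (⨆ J : Fin m →₀ ℕ, ‖coeff J f‖ * (1:ℝ) ^ (J.sum fun _ k => k))
        = gaussNormAt 1 f := rfl
    calc ‖coeff I f‖ = ‖coeff I f‖ * (1:ℝ) ^ (I.sum fun _ k => k) := by simp
      _ ≤ gaussNormAt 1 f := h2 ▸ h1
      _ ≤ 1 := hnorm
  -- choose θ
  obtain ⟨θ, hθ0, hθ1, hθρ⟩ : ∃ θ : ℝ, 0 < θ ∧ θ ≤ 1 ∧ M ^ θ ≤ ρ := by
    by_cases hMρ : M ≤ ρ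
    · exact ⟨1, one_pos, le_refl _, by rwa [Real.rpow_one]⟩
    · push_neg at hMρ
      have hM1' : 1 < M := lt_trans hρ hMρ
      refine ⟨Real.logb M ρ, Real.logb_pos hM1' hρ, ?_, ?_⟩
      · rw [← Real.logb_self_eq_one hM1']
        exact Real.logb_le_logb_of_le hM1' hρ0 hMρ.le
      · rw [Real.rpow_logb hM0 (ne_of_gt hM1') hρ0]
  set lam' : ℝ := ρ₀ ^ θ with hlam'def
  have hlam'1 : 1 < lam' := (Real.one_lt_rpow_iff_of_pos hρ₀0).mpr (Or.inl ⟨hρ₀, hθ0⟩)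
  have hlam'0 : (0:ℝ) < lam' := lt_trans one_pos hlam'1
  -- the λ'-Gauss norm of f is at most ρ
  have hkey : ∀ I, ‖coeff I f‖ * lam' ^ deg I ≤ ρ := by
    intro I
    rcases eq_or_ne ‖coeff I f‖ 0 with h0 | h0
    · rw [h0, zero_mul]; linarith
    have hpos : 0 < ‖coeff I f‖ := (norm_nonneg _).lt_of_ne (Ne.symm h0)
    have hcast : lam' ^ deg I = (ρ₀ ^ deg I) ^ θ := by
      rw [hlam'def, ← Real.rpow_natCast (ρ₀ ^ θ) (deg I), ← Real.rpow_natCast ρ₀ (deg I),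
        ← Real.rpow_mul hρ₀0.le, ← Real.rpow_mul hρ₀0.le, mul_comm]
    rw [hcast]
    have hsplit : ‖coeff I f‖ = ‖coeff I f‖ ^ (1 - θ) * ‖coeff I f‖ ^ θ := by
      rw [← Real.rpow_add hpos, sub_add_cancel, Real.rpow_one]
    calc ‖coeff I f‖ * (ρ₀ ^ deg I) ^ θ
        = ‖coeff I f‖ ^ (1-θ) * (‖coeff I f‖ ^ θ * (ρ₀ ^ deg I) ^ θ) := by
          rw [← mul_assoc, ← hsplit]
      _ = ‖coeff I f‖ ^ (1-θ) * (‖coeff I f‖ * ρ₀ ^ deg I) ^ θ := by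
          rw [← Real.mul_rpow (norm_nonneg _) (by positivity)]
      _ ≤ 1 * M ^ θ := by
          apply mul_le_mul
          · exact Real.rpow_le_one (norm_nonneg _) (hb1 I) (by linarith)
          · exact Real.rpow_le_rpow (by positivity) (hM I) hθ0.le
          · positivity
          · norm_num
      _ = M ^ θ := one_mul _
      _ ≤ ρ := hθρ
  -- choose λ strictly between 1 and λ'
  obtain ⟨lam, hlamdef⟩ : ∃ lam : ℝ, lam = (1 + lam')/2 := ⟨_, rfl⟩
  have hlam1 : 1 < lam := by rw [hlamdef]; linarith
  have hlamlt : lam < lam' := by rw [hlamdef]; linarith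
  have hlam0 : (0:ℝ) < lam := by linarith
  obtain ⟨r, hrdef⟩ : ∃ r : ℝ, r = lam / lam' := ⟨_, rfl⟩
  have hr0 : (0:ℝ) ≤ r := by rw [hrdef]; positivity
  have hr1 : r < 1 := by rw [hrdef]; exact (div_lt_one hlam'0).mpr hlamlt
  -- submultiplicativity of λ'-Gauss bounds
  have hmulbound : ∀ (p q : MvPowerSeries (Fin m) K) (A B : ℝ), 0 ≤ A → 0 ≤ B →
      (∀ I, ‖coeff I p‖ * lam' ^ deg I ≤ A) →
      (∀ I, ‖coeff I q‖ * lam' ^ deg I ≤ B) →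
      ∀ I, ‖coeff I (p * q)‖ * lam' ^ deg I ≤ A * B := by
    intro p q A B hA hB hp hq I
    have hpow0 : (0:ℝ) < lam' ^ deg I := by positivity
    rw [coeff_mul, ← le_div_iff₀ hpow0]
    apply IsUltrametricDist.norm_sum_le_of_forall_le_of_nonneg (by positivity)
    rintro ⟨J, J'⟩ hJ
    rw [Finset.HasAntidiagonal.mem_antidiagonal] at hJ
    have hdadd : deg J + deg J' = deg I := by
      rw [← hJ, hdegdef]
      exact (Finsupp.sum_add_index' (fun _ => rfl) (fun _ _ _ => rfl)).symm
    have h1 : ‖coeff J p‖ ≤ A / lam' ^ deg J := (le_div_iff₀ (by positivity)).mpr (hp J)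
    have h2 : ‖coeff J' q‖ ≤ B / lam' ^ deg J' := (le_div_iff₀ (by positivity)).mpr (hq J')
    calc ‖coeff J p * coeff J' q‖ = ‖coeff J p‖ * ‖coeff J' q‖ := norm_mul _ _
      _ ≤ (A / lam' ^ deg J) * (B / lam' ^ deg J') :=
          mul_le_mul h1 h2 (norm_nonneg _) (by positivity)
      _ = A * B / lam' ^ deg I := by rw [div_mul_div_comm, ← pow_add, hdadd]
  -- powers of f
  have hpow : ∀ (j : ℕ) (I : Fin m →₀ ℕ), ‖coeff I (f ^ j)‖ * lam' ^ deg I ≤ ρ ^ j := by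
    intro j
    induction j with
    | zero =>
      intro I
      rw [pow_zero, pow_zero, coeff_one]
      rcases eq_or_ne I 0 with rfl | hI
      · simp [hdegdef]
      · simp [hI]
    | succ j ih =>
      intro I
      rw [pow_succ, pow_succ]
      exact hmulbound _ _ _ _ (pow_nonneg hρ0.le j) hρ0.le ih hkey I
  -- term bound
  have htermb : ∀ (h : PowerSeries K) (j : ℕ) (I : Fin m →₀ ℕ),
      ‖PowerSeries.coeff j h * coeff I (f ^ j)‖ ≤
        (‖PowerSeries.coeff j h‖ * ρ ^ j) / lam' ^ deg I := by
    intro h j I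
    have hpow0 : (0:ℝ) < lam' ^ deg I := by positivity
    rw [norm_mul]
    have : ‖coeff I (f ^ j)‖ ≤ ρ ^ j / lam' ^ deg I :=
      (le_div_iff₀ hpow0).mpr (hpow j I)
    calc ‖PowerSeries.coeff j h‖ * ‖coeff I (f ^ j)‖
        ≤ ‖PowerSeries.coeff j h‖ * (ρ ^ j / lam' ^ deg I) :=
          mul_le_mul_of_nonneg_left this (norm_nonneg _)
      _ = (‖PowerSeries.coeff j h‖ * ρ ^ j) / lam' ^ deg I := by ring
  -- summability for every admissible coefficient series
  have hsummAll : ∀ (h : PowerSeries K),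
      Tendsto (fun j : ℕ => ‖PowerSeries.coeff j h‖ * ρ ^ j) atTop (nhds 0) →
      ∀ I : Fin m →₀ ℕ, Summable fun j : ℕ =>
        PowerSeries.coeff j h * coeff I (f ^ j) := by
    intro h hh I
    apply NonarchimedeanAddGroup.summable_of_tendsto_cofinite_zero
    rw [Nat.cofinite_eq_atTop]
    apply squeeze_zero_norm (fun j => htermb h j I)
    simpa using hh.div_const (lam' ^ deg I)
  refine ⟨lam, hlam1, ?_⟩
  intro g hg
  -- bound for the coefficients of g
  have hgcof : Tendsto (fun j : ℕ => ‖PowerSeries.coeff j g‖ * ρ ^ j) cofinite (nhds 0) := by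
    rwa [Nat.cofinite_eq_atTop]
  obtain ⟨Cg₀, hCg₀⟩ := hgcof.bddAbove_range_of_cofinite
  set Cg : ℝ := max Cg₀ 1 with hCgdef
  have hCg0 : (0:ℝ) < Cg := lt_of_lt_of_le one_pos (le_max_right _ _)
  have hCg : ∀ j, ‖PowerSeries.coeff j g‖ * ρ ^ j ≤ Cg := fun j =>
    le_trans (hCg₀ (Set.mem_range_self j)) (le_max_left _ _)
  refine ⟨hsummAll g hg, ?_, ?_, ?_⟩
  · -- MemT
    unfold MemT
    have hb : ∀ I : Fin m →₀ ℕ,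
        ‖coeff I (_root_.subst g f)‖ * lam ^ (I.sum fun _ k => k) ≤ Cg * r ^ deg I := by
      intro I
      have h1 : ‖coeff I (_root_.subst g f)‖ ≤ Cg / lam' ^ deg I := by
        rw [hC]
        apply IsUltrametricDist.norm_tsum_le_of_forall_le_of_nonneg (by positivity)
        intro j
        refine (htermb g j I).trans ?_
        apply div_le_div_of_nonneg_right (hCg j) (by positivity)
      calc ‖coeff I (_root_.subst g f)‖ * lam ^ (I.sum fun _ k => k)
          ≤ (Cg / lam' ^ deg I) * lam ^ deg I :=
            mul_le_mul_of_nonneg_right h1 (by positivity)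
        _ = Cg * r ^ deg I := by rw [hrdef, div_pow, div_mul_eq_mul_div, mul_div_assoc]
    apply squeeze_zero (fun I => mul_nonneg (norm_nonneg _) (by positivity)) hb
    have := (tendsto_pow_atTop_nhds_zero_of_lt_one hr0 hr1).comp (aux_deg_tendsto m)
    simpa using this.const_mul Cg
  · -- _root_.subst 1 f = 1
    apply MvPowerSeries.ext
    intro I
    rw [hC, tsum_eq_single 0 (fun j hj => by simp [PowerSeries.coeff_one, hj]), pow_zero]
    simp
  · intro g' hg'
    constructor
    · -- additivity
      apply MvPowerSeries.ext
      intro I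
      rw [map_add, hC, hC, hC]
      rw [← Summable.tsum_add (hsummAll g hg I) (hsummAll g' hg' I)]
      apply tsum_congr
      intro j
      rw [map_add, add_mul]
    · -- multiplicativity
      have hprodsum : ∀ (J J' : Fin m →₀ ℕ), Summable (fun x : ℕ × ℕ =>
          (PowerSeries.coeff x.1 g * coeff J (f ^ x.1)) *
          (PowerSeries.coeff x.2 g' * coeff J' (f ^ x.2))) := by
        intro J J'
        apply NonarchimedeanAddGroup.summable_of_tendsto_cofinite_zero
        apply squeeze_zero_norm (a := fun x : ℕ × ℕ =>
          ((‖PowerSeries.coeff x.1 g‖ * ρ ^ x.1) / lam' ^ deg J) *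
          ((‖PowerSeries.coeff x.2 g'‖ * ρ ^ x.2) / lam' ^ deg J'))
        · intro x
          rw [norm_mul]
          exact mul_le_mul (htermb g x.1 J) (htermb g' x.2 J') (norm_nonneg _) (by positivity)
        · refine aux_prod_tendsto
            (u := fun j : ℕ => (‖PowerSeries.coeff j g‖ * ρ ^ j) / lam' ^ deg J)
            (v := fun k : ℕ => (‖PowerSeries.coeff k g'‖ * ρ ^ k) / lam' ^ deg J')
            (fun n => by positivity) (fun n => by positivity) ?_ ?_
          · simpa using hg.div_const (lam' ^ deg J)
          · simpa using hg'.div_const (lam' ^ deg J')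
      apply MvPowerSeries.ext
      intro I
      rw [hC, coeff_mul]
      have hinner : ∀ n : ℕ, (PowerSeries.coeff n (g * g')) * coeff I (f ^ n)
          = ∑ p ∈ Finset.HasAntidiagonal.antidiagonal I, ∑ kl ∈ Finset.HasAntidiagonal.antidiagonal n,
              (PowerSeries.coeff kl.1 g * coeff p.1 (f ^ kl.1)) *
              (PowerSeries.coeff kl.2 g' * coeff p.2 (f ^ kl.2)) := by
        intro n
        rw [Finset.sum_comm, PowerSeries.coeff_mul, Finset.sum_mul]
        refine Finset.sum_congr rfl fun kl hkl => ?_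
        rw [Finset.HasAntidiagonal.mem_antidiagonal] at hkl
        have hfac : ∑ p ∈ Finset.HasAntidiagonal.antidiagonal I,
            (PowerSeries.coeff kl.1 g * coeff p.1 (f ^ kl.1)) *
            (PowerSeries.coeff kl.2 g' * coeff p.2 (f ^ kl.2))
            = (PowerSeries.coeff kl.1 g * PowerSeries.coeff kl.2 g') *
              ∑ p ∈ Finset.HasAntidiagonal.antidiagonal I, coeff p.1 (f ^ kl.1) * coeff p.2 (f ^ kl.2) := by
          rw [Finset.mul_sum]
          exact Finset.sum_congr rfl fun p _ => by ring
        rw [hfac, ← coeff_mul, ← pow_add, hkl]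
      calc (∑' n : ℕ, PowerSeries.coeff n (g * g') * coeff I (f ^ n))
          = ∑' n : ℕ, ∑ p ∈ Finset.HasAntidiagonal.antidiagonal I, ∑ kl ∈ Finset.HasAntidiagonal.antidiagonal n,
              (PowerSeries.coeff kl.1 g * coeff p.1 (f ^ kl.1)) *
              (PowerSeries.coeff kl.2 g' * coeff p.2 (f ^ kl.2)) := tsum_congr hinner
        _ = ∑ p ∈ Finset.HasAntidiagonal.antidiagonal I, ∑' n : ℕ, ∑ kl ∈ Finset.HasAntidiagonal.antidiagonal n,
              (PowerSeries.coeff kl.1 g * coeff p.1 (f ^ kl.1)) *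
              (PowerSeries.coeff kl.2 g' * coeff p.2 (f ^ kl.2)) :=
            Summable.tsum_finsetSum (fun p _ => summable_sum_mul_antidiagonal_of_summable_mul
              (f := fun j => PowerSeries.coeff j g * coeff p.1 (f ^ j))
              (g := fun k => PowerSeries.coeff k g' * coeff p.2 (f ^ k))
              (hprodsum p.1 p.2))
        _ = ∑ p ∈ Finset.HasAntidiagonal.antidiagonal I,
              (∑' j : ℕ, PowerSeries.coeff j g * coeff p.1 (f ^ j)) *
              (∑' k : ℕ, PowerSeries.coeff k g' * coeff p.2 (f ^ k)) :=
            Finset.sum_congr rfl fun p _ =>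
              (Summable.tsum_mul_tsum_eq_tsum_sum_antidiagonal (hsummAll g hg p.1)
                (hsummAll g' hg' p.2) (hprodsum p.1 p.2)).symm
        _ = ∑ p ∈ Finset.HasAntidiagonal.antidiagonal I, coeff p.1 (_root_.subst g f) * coeff p.2 (_root_.subst g' f) := by
            refine Finset.sum_congr rfl fun p _ => ?_
            rw [hC, hC]
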